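/- With g_α(x) = Σ_{n≥0} C(n,(n+α)/2) x^n as formal power series, whenever α, β, γ, δ are nonnegative integers with α + β = γ + δ, we have g_α(x)·g_β(x) = g_γ(x)·g_δ(x). -/

import Mathlib

open PowerSeries

/-- `C(n, (n+α)/2)`, taken to be `0` when `(n+α)/2` is not an integer. -/
def hb (n α : ℕ) : ℚ := if (n + α) % 2 = 0 then (n.choose ((n + α) / 2) : ℚ) else 0

/-- The formal power series `g_α(x) = Σ_{n≥0} C(n, (n+α)/2) xⁿ`. -/
def g (α : ℕ) : PowerSeries ℚ := PowerSeries.mk fun n => hb n α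

lemma hb_succ (n α : ℕ) : hb (n+1) (α+1) = hb n α + hb n (α+2) := by
  unfold hb
  rcases Nat.even_or_odd (n + α) with he | ho
  · have h0 : (n + α) % 2 = 0 := Nat.even_iff.mp he
    rw [if_pos (by omega), if_pos h0, if_pos (by omega)]
    have e1 : (n + 1 + (α + 1)) / 2 = (n + α) / 2 + 1 := by omega
    have e2 : (n + (α + 2)) / 2 = (n + α) / 2 + 1 := by omega
    rw [e1, e2, Nat.choose_succ_succ]
    push_cast; ring
  · have h1 : (n + α) % 2 = 1 := Nat.odd_iff.mp ho
    rw [if_neg (by omega), if_neg (by omega), if_neg (by omega)]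
    simp

lemma hb_zero (α : ℕ) : hb 0 (α+1) = 0 := by
  unfold hb
  split_ifs with h
  · rw [Nat.choose_eq_zero_of_lt (by omega)]; simp
  · rfl

/-- Pascal's rule as a recurrence: `g (α+1) = X * (g α + g (α+2))`. -/
lemma grec (α : ℕ) : g (α+1) = X * (g α + g (α+2)) := by
  ext n
  cases n with
  | zero =>
    simp [g, coeff_zero_eq_constantCoeff, map_mul, constantCoeff_X, hb_zero]
  | succ n =>
    rw [coeff_succ_X_mul, map_add]
    simp only [g, coeff_mk]
    exact hb_succ n α

lemma hb_one_step (n : ℕ) : hb (n+1) 0 = 2 * hb n 1 := by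
  unfold hb
  rcases Nat.even_or_odd (n+1) with he | ho
  · have h0 : (n + 1) % 2 = 0 := Nat.even_iff.mp he
    rw [if_pos (by omega), if_pos (by omega)]
    obtain ⟨m, hm⟩ : ∃ m, n = 2*m + 1 := ⟨n/2, by omega⟩
    subst hm
    have e1 : (2*m+1+1+0)/2 = m+1 := by omega
    rw [e1, Nat.choose_succ_succ]
    have : (2*m+1).choose m = (2*m+1).choose (m+1) := by
      have h := Nat.choose_symm (n := 2*m+1) (k := m+1) (by omega)
      rw [show 2*m+1-(m+1) = m by omega] at h
      exact h
    rw [this]; push_cast; ring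
  · have h1 : (n + 1) % 2 = 1 := Nat.odd_iff.mp ho
    rw [if_neg (by omega), if_neg (by omega)]
    ring

/-- `g 0 = 1 + 2 X g 1`. -/
lemma gtwo : g 0 = 1 + 2 * X * g 1 := by
  ext n
  cases n with
  | zero =>
    simp [g, coeff_zero_eq_constantCoeff, map_mul, map_add, constantCoeff_X]
    unfold hb; norm_num
  | succ n =>
    rw [map_add, coeff_one, if_neg n.succ_ne_zero, mul_assoc, (map_ofNat (C (R := ℚ)) 2).symm,
      coeff_C_mul, coeff_succ_X_mul]
    simp only [g, coeff_mk]
    rw [hb_one_step]; ring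

lemma hb_ode (n : ℕ) : hb (n+3) 0 * ((n:ℚ)+3) = 4 * hb (n+1) 0 + 4 * (((n:ℚ)+1) * hb (n+1) 0) := by
  unfold hb
  rcases Nat.even_or_odd n with he | ho
  · have h0 : n % 2 = 0 := Nat.even_iff.mp he
    rw [if_neg (by omega), if_neg (by omega)]
    ring
  · have h1 : n % 2 = 1 := Nat.odd_iff.mp ho
    obtain ⟨m, hm⟩ : ∃ m, n = 2*m + 1 := ⟨(n-1)/2, by omega⟩
    subst hm
    rw [if_pos (by omega), if_pos (by omega),
      show (2*m+1+3+0)/2 = m+2 by omega, show (2*m+1+1+0)/2 = m+1 by omega,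
      show 2*m+1+3 = 2*(m+2) by ring, show 2*m+1+1 = 2*(m+1) by ring,
      ← Nat.centralBinom_eq_two_mul_choose, ← Nat.centralBinom_eq_two_mul_choose]
    have key := Nat.succ_mul_centralBinom_succ (m+1)
    have keyQ : ((m:ℚ)+2) * (Nat.centralBinom (m+2) : ℚ)
        = 2*(2*(m:ℚ)+3) * (Nat.centralBinom (m+1) : ℚ) := by
      exact_mod_cast congrArg (Nat.cast : ℕ → ℚ) key
    push_cast
    linear_combination (2:ℚ) * keyQ

/-- The ODE for `g 0`, i.e. `(1 - 4X²) (g 0)' = 4 X g 0` in rearranged form. -/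
lemma gode : d⁄dX ℚ (g 0) = 4 * X * g 0 + 4 * (X^2 * d⁄dX ℚ (g 0)) := by
  have h4 : (4:ℚ⟦X⟧) = C (4:ℚ) := (map_ofNat _ 4).symm
  ext n
  rw [map_add, mul_assoc, h4, coeff_C_mul, coeff_C_mul, sq, mul_assoc]
  cases n with
  | zero =>
    rw [coeff_derivative]
    simp [g, coeff_zero_eq_constantCoeff, map_mul, constantCoeff_X]
    unfold hb; norm_num
  | succ n =>
    rw [coeff_derivative, coeff_succ_X_mul]
    cases n with
    | zero =>
      rw [coeff_succ_X_mul, coeff_zero_eq_constantCoeff]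
      simp [g, map_mul, constantCoeff_X]
      unfold hb; norm_num [Nat.choose]
    | succ n =>
      rw [coeff_succ_X_mul, coeff_succ_X_mul, coeff_derivative]
      simp only [g, coeff_mk]
      push_cast
      have := hb_ode n
      push_cast at this
      linarith [this]

/-- `g 0` is `(1-4X²)^{-1/2}`. -/
lemma gsq : g 0 * g 0 * (1 - 4 * X^2) = 1 := by
  apply derivative.ext
  · have h4 : (4:ℚ⟦X⟧) = C (4:ℚ) := (map_ofNat _ 4).symm
    have hd4 : d⁄dX ℚ (4 : ℚ⟦X⟧) = 0 := by rw [h4, derivative_C]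
    rw [Derivation.leibniz, Derivation.leibniz, map_sub, Derivation.map_one_eq_zero,
      Derivation.leibniz, Derivation.leibniz_pow, hd4, derivative_X]
    simp only [smul_eq_mul, Derivation.map_one_eq_zero]
    linear_combination (2 * g 0) * gode
  · simp [map_mul, map_sub, map_one, map_pow, constantCoeff_X, g, constantCoeff_mk]
    unfold hb; norm_num

lemma X2_ne : (4 * X^2 : ℚ⟦X⟧) ≠ 0 := by
  apply mul_ne_zero
  · intro h
    have h2 := congrArg (constantCoeff (R := ℚ)) h
    simp [map_ofNat] at h2
  · exact pow_ne_zero 2 X_ne_zero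

lemma gone_sq : g 1 * g 1 = g 0 * g 2 := by
  apply mul_left_cancel₀ X2_ne
  linear_combination (4*X*g 0) * grec 0 + (g 0 + 1 - 2*X*g 1) * gtwo - gsq

lemma gone_mul (β : ℕ) : g 1 * g β = g 0 * g (β+1) := by
  suffices h : ∀ β, g 1 * g β = g 0 * g (β+1) ∧ g 1 * g (β+1) = g 0 * g (β+2) from (h β).1
  intro β
  induction β with
  | zero => exact ⟨mul_comm _ _, gone_sq⟩
  | succ β ih =>
    refine ⟨ih.2, ?_⟩
    apply mul_left_cancel₀ (X_ne_zero : (X:ℚ⟦X⟧) ≠ 0)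
    linear_combination ih.2 - X * ih.1 + g 0 * grec (β+1) - g 1 * grec β

lemma gkey (α : ℕ) : ∀ β, g α * g β = g 0 * g (α + β) := by
  induction α using Nat.strong_induction_on with
  | _ α ih =>
    match α with
    | 0 => intro β; rw [zero_add]
    | 1 => intro β; rw [show 1+β = β+1 from by omega, gone_mul]
    | (α+2) =>
      intro β
      apply mul_left_cancel₀ (X_ne_zero : (X:ℚ⟦X⟧) ≠ 0)
      have h1 := ih (α+1) (by omega) β
      have h0 := ih α (by omega) β
      rw [show α+1+β = α+β+1 from by omega] at h1
      rw [show α+2+β = α+β+2 from by omega]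
      linear_combination h1 - X * h0 + g 0 * grec (α + β) - g β * grec α

theorem g_mul_depends_only_on_sum (α β γ δ : ℕ) (h : α + β = γ + δ) :
    g α * g β = g γ * g δ := by
  rw [gkey α β, gkey γ δ, h]
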